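/- Let α(t) = (t⁶, t⁷ + t¹⁰ + t¹¹). Let ψ = (ψ₁, ψ₂) be a formal diffeomorphism of (ℂ²,0) and ρ a formal diffeomorphism of (ℂ,0) such that ψ₁(α(t)) = ρ(t)⁶ and ψ₂(α(t)) = ρ(t)⁷ + ρ(t)¹⁰ + ρ(t)¹¹ in ℂ[[t]] (i.e. ψ stabilizes the branch Γ₀ parametrized by α). Then the linear part of ψ is the identity: ψ₁ − x ∈ m² and ψ₂ − y ∈ m². -/

import Mathlib

/-!
STATEMENT 9: a formal diffeomorphism of `(ℂ²,0)` stabilizing the branch `Γ₀`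
parametrized by `α(t) = (t⁶, t⁷ + t¹⁰ + t¹¹)` has linear part equal to the
identity: `ψ₁ − x ∈ m²` and `ψ₂ − y ∈ m²`.
-/

open PowerSeries

/-- Substitution of `(x(t), y(t))` (both with zero constant term) into a
two-variable formal power series. -/
noncomputable def substPS (xt yt : PowerSeries ℂ) (f : MvPowerSeries (Fin 2) ℂ) :
    PowerSeries ℂ :=
  PowerSeries.mk fun k =>
    ∑ ij ∈ Finset.range (k + 1) ×ˢ Finset.range (k + 1),
      MvPowerSeries.coeff (Finsupp.single 0 ij.1 + Finsupp.single 1 ij.2) f *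
        PowerSeries.coeff k (xt ^ ij.1 * yt ^ ij.2)

/-- The maximal ideal of `ℂ[[x,y]]`: series with zero constant term. -/
noncomputable def mIdeal : Ideal (MvPowerSeries (Fin 2) ℂ) :=
  RingHom.ker (MvPowerSeries.constantCoeff : MvPowerSeries (Fin 2) ℂ →+* ℂ)

/-- The linear part of a pair `(ψ₁, ψ₂)` of elements of the maximal ideal of
`ℂ[[x,y]]`: the matrix of degree-1 coefficients. -/
noncomputable def linPartPair (psi1 psi2 : MvPowerSeries (Fin 2) ℂ) :
    Matrix (Fin 2) (Fin 2) ℂ :=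
  Matrix.of fun i j =>
    MvPowerSeries.coeff (Finsupp.single j 1) (if i = 0 then psi1 else psi2)

/-- The `x`-component `t⁶` of `α`. -/
noncomputable def alphaX : PowerSeries ℂ := PowerSeries.X ^ 6

/-- The `y`-component `t⁷ + t¹⁰ + t¹¹` of `α`. -/
noncomputable def alphaY : PowerSeries ℂ :=
  PowerSeries.X ^ 7 + PowerSeries.X ^ 10 + PowerSeries.X ^ 11


-- coefficient-of-product helpers
lemma cm0 (f g : PowerSeries ℂ) : coeff 0 (f * g) = coeff 0 f * coeff 0 g := by
  simp [PowerSeries.coeff_mul, Finset.Nat.sum_antidiagonal_eq_sum_range_succ_mk,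
    Finset.sum_range_succ]

lemma cm1 (f g : PowerSeries ℂ) : coeff 1 (f * g) =
    coeff 0 f * coeff 1 g + coeff 1 f * coeff 0 g := by
  simp [PowerSeries.coeff_mul, Finset.Nat.sum_antidiagonal_eq_sum_range_succ_mk,
    Finset.sum_range_succ]

lemma cm2 (f g : PowerSeries ℂ) : coeff 2 (f * g) =
    coeff 0 f * coeff 2 g + coeff 1 f * coeff 1 g + coeff 2 f * coeff 0 g := by
  simp [PowerSeries.coeff_mul, Finset.Nat.sum_antidiagonal_eq_sum_range_succ_mk,
    Finset.sum_range_succ]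

lemma cm3 (f g : PowerSeries ℂ) : coeff 3 (f * g) =
    coeff 0 f * coeff 3 g + coeff 1 f * coeff 2 g + coeff 2 f * coeff 1 g +
      coeff 3 f * coeff 0 g := by
  simp [PowerSeries.coeff_mul, Finset.Nat.sum_antidiagonal_eq_sum_range_succ_mk,
    Finset.sum_range_succ]

lemma cm4 (f g : PowerSeries ℂ) : coeff 4 (f * g) =
    coeff 0 f * coeff 4 g + coeff 1 f * coeff 3 g + coeff 2 f * coeff 2 g +
      coeff 3 f * coeff 1 g + coeff 4 f * coeff 0 g := by
  simp [PowerSeries.coeff_mul, Finset.Nat.sum_antidiagonal_eq_sum_range_succ_mk,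
    Finset.sum_range_succ]

lemma coeff_alpha_eq_zero (i j k : ℕ) (h : k < 6 * i + 7 * j) :
    coeff k (alphaX ^ i * alphaY ^ j) = 0 := by
  have hY : (PowerSeries.X : PowerSeries ℂ) ^ 7 ∣ alphaY :=
    ⟨1 + PowerSeries.X ^ 3 + PowerSeries.X ^ 4, by rw [alphaY]; ring⟩
  have hdvd : (PowerSeries.X : PowerSeries ℂ) ^ (6 * i + 7 * j) ∣ alphaX ^ i * alphaY ^ j := by
    rw [pow_add, pow_mul, pow_mul]
    exact mul_dvd_mul (by rw [alphaX]) (pow_dvd_pow_of_dvd hY j)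
  exact PowerSeries.X_pow_dvd_iff.mp hdvd k h

lemma substPS_coeff_low (f : MvPowerSeries (Fin 2) ℂ)
    (hf : MvPowerSeries.coeff 0 f = 0) (k : ℕ) (h6 : 6 ≤ k) (h11 : k ≤ 11) :
    PowerSeries.coeff k (substPS alphaX alphaY f) =
      MvPowerSeries.coeff (Finsupp.single 0 1) f * PowerSeries.coeff k alphaX +
        MvPowerSeries.coeff (Finsupp.single 1 1) f * PowerSeries.coeff k alphaY := by
  rw [substPS, PowerSeries.coeff_mk]
  have hsub : ({(1, 0), (0, 1)} : Finset (ℕ × ℕ)) ⊆ Finset.range (k + 1) ×ˢ Finset.range (k + 1) := by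
    intro p hp
    simp only [Finset.mem_insert, Finset.mem_singleton] at hp
    rcases hp with rfl | rfl <;> simp [Finset.mem_product] <;> omega
  have hzero : ∀ p ∈ Finset.range (k + 1) ×ˢ Finset.range (k + 1),
      p ∉ ({(1, 0), (0, 1)} : Finset (ℕ × ℕ)) →
      MvPowerSeries.coeff (Finsupp.single 0 p.1 + Finsupp.single 1 p.2) f *
        PowerSeries.coeff k (alphaX ^ p.1 * alphaY ^ p.2) = 0 := by
    rintro ⟨i, j⟩ hp hns
    simp only [Finset.mem_insert, Finset.mem_singleton, Prod.mk.injEq, not_or, not_and] at hns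
    by_cases h00 : i = 0 ∧ j = 0
    · obtain ⟨rfl, rfl⟩ := h00
      simp [hf]
    · have hk : k < 6 * i + 7 * j := by omega
      exact mul_eq_zero_of_right _ (coeff_alpha_eq_zero i j k hk)
  rw [← Finset.sum_subset hsub hzero]
  rw [Finset.sum_insert (by decide), Finset.sum_singleton]
  simp

lemma mem_mIdeal_sq (f : MvPowerSeries (Fin 2) ℂ)
    (h0 : MvPowerSeries.coeff 0 f = 0)
    (hx : MvPowerSeries.coeff (Finsupp.single 0 1) f = 0)
    (hy : MvPowerSeries.coeff (Finsupp.single 1 1) f = 0) :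
    f ∈ mIdeal ^ 2 := by
  classical
  set g : MvPowerSeries (Fin 2) ℂ := fun d => f (d + Finsupp.single 0 1) with hgdef
  set h : MvPowerSeries (Fin 2) ℂ :=
    fun d => if d 0 = 0 then f (d + Finsupp.single 1 1) else 0 with hhdef
  have key : ∀ e : Fin 2 →₀ ℕ, MvPowerSeries.coeff e f =
      MvPowerSeries.coeff e (MvPowerSeries.X 0 * g + MvPowerSeries.X 1 * h) := by
    intro e
    rw [map_add, MvPowerSeries.X, MvPowerSeries.X, MvPowerSeries.coeff_monomial_mul,
      MvPowerSeries.coeff_monomial_mul]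
    have htsub0 : ((e - Finsupp.single (1:Fin 2) 1 : Fin 2 →₀ ℕ) : Fin 2 →₀ ℕ) 0 = e 0 := by
      rw [Finsupp.tsub_apply]; simp
    by_cases h0e : 1 ≤ e 0
    · have hle := Finsupp.single_le_iff.mpr h0e
      have hge : MvPowerSeries.coeff (e - Finsupp.single 0 1) g = MvPowerSeries.coeff e f := by
        rw [MvPowerSeries.coeff_apply, MvPowerSeries.coeff_apply, hgdef]
        show f _ = f e
        rw [tsub_add_cancel_of_le hle]
      have hh2 : (if Finsupp.single (1:Fin 2) 1 ≤ e then
          (1:ℂ) * MvPowerSeries.coeff (e - Finsupp.single 1 1) h else 0) = 0 := by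
        split_ifs with hle1
        · rw [MvPowerSeries.coeff_apply, hhdef]
          show (1:ℂ) * (if _ then _ else _) = 0
          rw [if_neg (by omega : ¬ ((e - Finsupp.single (1:Fin 2) 1 : Fin 2 →₀ ℕ) : Fin 2 →₀ ℕ) 0 = 0)]
          simp
        · rfl
      rw [hh2, if_pos hle, hge, one_mul, add_zero]
    · rw [if_neg (fun hle => h0e (Finsupp.single_le_iff.mp hle)), zero_add]
      have he0 : e 0 = 0 := by omega
      by_cases h1e : 1 ≤ e 1
      · have hle := Finsupp.single_le_iff.mpr h1e
        rw [if_pos hle, one_mul, MvPowerSeries.coeff_apply, MvPowerSeries.coeff_apply, hhdef]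
        show f e = (if _ then _ else _)
        rw [if_pos (by omega : ((e - Finsupp.single (1:Fin 2) 1 : Fin 2 →₀ ℕ) : Fin 2 →₀ ℕ) 0 = 0)]
        rw [tsub_add_cancel_of_le hle]
      · have he1 : e 1 = 0 := by omega
        have he : e = 0 := by
          ext i; fin_cases i
          · simpa using he0
          · simpa using he1
        rw [if_neg (fun hle => h1e (Finsupp.single_le_iff.mp hle)), he, h0]
  have hfeq : f = MvPowerSeries.X 0 * g + MvPowerSeries.X 1 * h := MvPowerSeries.ext key
  have hX0 : MvPowerSeries.X (0:Fin 2) ∈ mIdeal := by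
    rw [mIdeal, RingHom.mem_ker]; exact MvPowerSeries.constantCoeff_X 0
  have hX1 : MvPowerSeries.X (1:Fin 2) ∈ mIdeal := by
    rw [mIdeal, RingHom.mem_ker]; exact MvPowerSeries.constantCoeff_X 1
  have hg0 : g ∈ mIdeal := by
    rw [mIdeal, RingHom.mem_ker, ← MvPowerSeries.coeff_zero_eq_constantCoeff_apply,
      MvPowerSeries.coeff_apply, hgdef]
    show f (0 + Finsupp.single 0 1) = 0
    rw [zero_add]
    exact hx
  have hh0 : h ∈ mIdeal := by
    rw [mIdeal, RingHom.mem_ker, ← MvPowerSeries.coeff_zero_eq_constantCoeff_apply,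
      MvPowerSeries.coeff_apply, hhdef]
    show (if ((0:Fin 2 →₀ ℕ) : Fin 2 →₀ ℕ) 0 = 0 then f (0 + Finsupp.single 1 1) else (0:ℂ)) = 0
    rw [if_pos (by simp : ((0:Fin 2 →₀ ℕ) : Fin 2 →₀ ℕ) 0 = 0), zero_add]
    exact hy
  rw [hfeq, pow_two]
  exact Ideal.add_mem _ (Ideal.mul_mem_mul hX0 hg0) (Ideal.mul_mem_mul hX1 hh0)

theorem stabilizer_of_gamma0_has_identity_linear_part
    (psi1 psi2 : MvPowerSeries (Fin 2) ℂ)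
    (hpsi1 : psi1 ∈ mIdeal) (hpsi2 : psi2 ∈ mIdeal)
    (hlin : IsUnit (linPartPair psi1 psi2).det)
    (rho : PowerSeries ℂ)
    (hrho0 : PowerSeries.constantCoeff rho = 0)
    (hrho1 : PowerSeries.coeff 1 rho ≠ 0)
    (h1 : substPS alphaX alphaY psi1 = rho ^ 6)
    (h2 : substPS alphaX alphaY psi2 = rho ^ 7 + rho ^ 10 + rho ^ 11) :
    psi1 - MvPowerSeries.X 0 ∈ mIdeal ^ 2 ∧ psi2 - MvPowerSeries.X 1 ∈ mIdeal ^ 2 := by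
  have h01 : MvPowerSeries.coeff 0 psi1 = 0 := by
    rw [mIdeal, RingHom.mem_ker] at hpsi1
    rw [MvPowerSeries.coeff_zero_eq_constantCoeff_apply]; exact hpsi1
  have h02 : MvPowerSeries.coeff 0 psi2 = 0 := by
    rw [mIdeal, RingHom.mem_ker] at hpsi2
    rw [MvPowerSeries.coeff_zero_eq_constantCoeff_apply]; exact hpsi2
  obtain ⟨q, hq⟩ : (PowerSeries.X : PowerSeries ℂ) ∣ rho := PowerSeries.X_dvd_iff.mpr hrho0
  have hE0 : coeff 0 q ≠ 0 := by
    intro h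
    apply hrho1
    rw [hq]
    simpa [h] using PowerSeries.coeff_succ_X_mul 0 q
  -- equation extraction
  have hS : ∀ k : ℕ, 6 ≤ k → k ≤ 11 →
      MvPowerSeries.coeff (Finsupp.single 0 1) psi1 * PowerSeries.coeff k alphaX +
        MvPowerSeries.coeff (Finsupp.single 1 1) psi1 * PowerSeries.coeff k alphaY =
      (if 6 ≤ k then coeff (k - 6) (q ^ 6) else 0) := by
    intro k hk6 hk11
    have h := congrArg (coeff k) h1
    rw [substPS_coeff_low psi1 h01 k hk6 hk11, hq, mul_pow,
      PowerSeries.coeff_X_pow_mul'] at h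
    exact h
  have hT : ∀ k : ℕ, 6 ≤ k → k ≤ 11 →
      MvPowerSeries.coeff (Finsupp.single 0 1) psi2 * PowerSeries.coeff k alphaX +
        MvPowerSeries.coeff (Finsupp.single 1 1) psi2 * PowerSeries.coeff k alphaY =
      (if 7 ≤ k then coeff (k - 7) (q ^ 7) else 0) +
      (if 10 ≤ k then coeff (k - 10) (q ^ 10) else 0) +
      (if 11 ≤ k then coeff (k - 11) (q ^ 11) else 0) := by
    intro k hk6 hk11
    have h := congrArg (coeff k) h2
    rw [substPS_coeff_low psi2 h02 k hk6 hk11, map_add, map_add, hq, mul_pow, mul_pow, mul_pow,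
      PowerSeries.coeff_X_pow_mul', PowerSeries.coeff_X_pow_mul',
      PowerSeries.coeff_X_pow_mul'] at h
    exact h
  -- numeric coefficients of alphaX, alphaY
  have cY : ∀ k : ℕ, PowerSeries.coeff k alphaY =
      (if k = 7 then 1 else 0) + (if k = 10 then 1 else 0) + (if k = 11 then 1 else 0) := by
    intro k
    rw [alphaY, map_add, map_add, PowerSeries.coeff_X_pow, PowerSeries.coeff_X_pow,
      PowerSeries.coeff_X_pow]
  have cX : ∀ k : ℕ, PowerSeries.coeff k alphaX = (if k = 6 then 1 else 0) := by
    intro k; rw [alphaX, PowerSeries.coeff_X_pow]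
  -- abbreviations
  set A1 := MvPowerSeries.coeff (Finsupp.single 0 1) psi1 with hA1
  set B1 := MvPowerSeries.coeff (Finsupp.single 1 1) psi1 with hB1
  set A2 := MvPowerSeries.coeff (Finsupp.single 0 1) psi2 with hA2
  set B2 := MvPowerSeries.coeff (Finsupp.single 1 1) psi2 with hB2
  -- clean coefficient equations
  have getS : ∀ k : ℕ, (h6 : 6 ≤ k) → (h11 : k ≤ 11) → True := fun _ _ _ => trivial
  have s6 : A1 = coeff 0 q ^ 6 := by
    have h := hS 6 (by norm_num) (by norm_num); rw [cX, cY] at h; norm_num at h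
    try simp only [← PowerSeries.coeff_zero_eq_constantCoeff_apply] at h
    first | linear_combination h | linear_combination -h
  have s7 : B1 = coeff 1 (q ^ 6) := by
    have h := hS 7 (by norm_num) (by norm_num); rw [cX, cY] at h; norm_num at h
    try simp only [← PowerSeries.coeff_zero_eq_constantCoeff_apply] at h
    first | linear_combination h | linear_combination -h
  have s9 : (0 : ℂ) = coeff 3 (q ^ 6) := by
    have h := hS 9 (by norm_num) (by norm_num); rw [cX, cY] at h; norm_num at h
    try simp only [← PowerSeries.coeff_zero_eq_constantCoeff_apply] at h
    first | linear_combination h | linear_combination -h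
  have s10 : B1 = coeff 4 (q ^ 6) := by
    have h := hS 10 (by norm_num) (by norm_num); rw [cX, cY] at h; norm_num at h
    try simp only [← PowerSeries.coeff_zero_eq_constantCoeff_apply] at h
    first | linear_combination h | linear_combination -h
  have t6 : A2 = 0 := by
    have h := hT 6 (by norm_num) (by norm_num); rw [cX, cY] at h; norm_num at h
    try simp only [← PowerSeries.coeff_zero_eq_constantCoeff_apply] at h
    first | linear_combination h | linear_combination -h
  have t7 : B2 = coeff 0 q ^ 7 := by
    have h := hT 7 (by norm_num) (by norm_num); rw [cX, cY] at h; norm_num at h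
    try simp only [← PowerSeries.coeff_zero_eq_constantCoeff_apply] at h
    first | linear_combination h | linear_combination -h
  have t8 : (0 : ℂ) = coeff 1 (q ^ 7) := by
    have h := hT 8 (by norm_num) (by norm_num); rw [cX, cY] at h; norm_num at h
    try simp only [← PowerSeries.coeff_zero_eq_constantCoeff_apply] at h
    first | linear_combination h | linear_combination -h
  have t9 : (0 : ℂ) = coeff 2 (q ^ 7) := by
    have h := hT 9 (by norm_num) (by norm_num); rw [cX, cY] at h; norm_num at h
    try simp only [← PowerSeries.coeff_zero_eq_constantCoeff_apply] at h
    first | linear_combination h | linear_combination -h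
  have t10 : B2 = coeff 3 (q ^ 7) + coeff 0 q ^ 10 := by
    have h := hT 10 (by norm_num) (by norm_num); rw [cX, cY] at h; norm_num at h
    try simp only [← PowerSeries.coeff_zero_eq_constantCoeff_apply] at h
    first | linear_combination h | linear_combination -h
  have t11 : B2 = coeff 4 (q ^ 7) + coeff 1 (q ^ 10) + coeff 0 q ^ 11 := by
    have h := hT 11 (by norm_num) (by norm_num); rw [cX, cY] at h; norm_num at h
    try simp only [← PowerSeries.coeff_zero_eq_constantCoeff_apply] at h
    first | linear_combination h | linear_combination -h
  -- step 1: coefficient 1 computations and E1 = 0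
  have cq2_0 : coeff 0 (q ^ 2) = coeff 0 q ^ 2 := by rw [pow_two, cm0]; ring
  have cq2_1 : coeff 1 (q ^ 2) = 2 * coeff 0 q * coeff 1 q := by rw [pow_two, cm1]; ring
  have hq3 : q ^ 3 = q ^ 2 * q := by ring
  have hq6 : q ^ 6 = q ^ 3 * q ^ 3 := by ring
  have hq7 : q ^ 7 = q ^ 6 * q := by ring
  have cq3_0 : coeff 0 (q ^ 3) = coeff 0 q ^ 3 := by rw [hq3, cm0, cq2_0]; ring
  have cq3_1 : coeff 1 (q ^ 3) = 3 * coeff 0 q ^ 2 * coeff 1 q := by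
    rw [hq3, cm1, cq2_0, cq2_1]; ring
  have cq6_0 : coeff 0 (q ^ 6) = coeff 0 q ^ 6 := by rw [hq6, cm0, cq3_0]; ring
  have cq6_1 : coeff 1 (q ^ 6) = 6 * coeff 0 q ^ 5 * coeff 1 q := by
    rw [hq6, cm1, cq3_0, cq3_1]; ring
  have cq7_0 : coeff 0 (q ^ 7) = coeff 0 q ^ 7 := by rw [hq7, cm0, cq6_0]; ring
  have cq7_1 : coeff 1 (q ^ 7) = (7 * coeff 0 q ^ 6) * coeff 1 q := by
    rw [hq7, cm1, cq6_0, cq6_1]; ring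
  have hE1 : coeff 1 q = 0 := by
    have h : (7 * coeff 0 q ^ 6) * coeff 1 q = 0 := by rw [← cq7_1]; exact t8.symm
    rcases mul_eq_zero.mp h with h' | h'
    · exact absurd h' (mul_ne_zero (by norm_num) (pow_ne_zero _ hE0))
    · exact h'
  -- step 2 : E2 = 0
  have cq2_2 : coeff 2 (q ^ 2) = 2 * coeff 0 q * coeff 2 q := by
    rw [pow_two, cm2, hE1]; ring
  have cq3_2 : coeff 2 (q ^ 3) = 3 * coeff 0 q ^ 2 * coeff 2 q := by
    rw [hq3, cm2, cq2_0, cq2_1, cq2_2, hE1]; ring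
  have cq6_2 : coeff 2 (q ^ 6) = 6 * coeff 0 q ^ 5 * coeff 2 q := by
    rw [hq6, cm2, cq3_0, cq3_1, cq3_2, hE1]; ring
  have cq7_2 : coeff 2 (q ^ 7) = (7 * coeff 0 q ^ 6) * coeff 2 q := by
    rw [hq7, cm2, cq6_0, cq6_1, cq6_2, hE1]; ring
  have hE2 : coeff 2 q = 0 := by
    have h : (7 * coeff 0 q ^ 6) * coeff 2 q = 0 := by rw [← cq7_2]; exact t9.symm
    rcases mul_eq_zero.mp h with h' | h'
    · exact absurd h' (mul_ne_zero (by norm_num) (pow_ne_zero _ hE0))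
    · exact h'
  -- step 3 : E3 = 0
  have cq2_3 : coeff 3 (q ^ 2) = 2 * coeff 0 q * coeff 3 q := by
    rw [pow_two, cm3, hE1, hE2]; ring
  have cq3_3 : coeff 3 (q ^ 3) = 3 * coeff 0 q ^ 2 * coeff 3 q := by
    rw [hq3, cm3, cq2_0, cq2_1, cq2_2, cq2_3, hE1, hE2]; ring
  have cq6_3 : coeff 3 (q ^ 6) = (6 * coeff 0 q ^ 5) * coeff 3 q := by
    rw [hq6, cm3, cq3_0, cq3_1, cq3_2, cq3_3, hE1, hE2]; ring
  have hE3 : coeff 3 q = 0 := by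
    have h : (6 * coeff 0 q ^ 5) * coeff 3 q = 0 := by rw [← cq6_3]; exact s9.symm
    rcases mul_eq_zero.mp h with h' | h'
    · exact absurd h' (mul_ne_zero (by norm_num) (pow_ne_zero _ hE0))
    · exact h'
  -- B1 = 0
  have hB1zero : B1 = 0 := by rw [s7, cq6_1, hE1]; ring
  -- step 4 : E4 = 0
  have cq2_4 : coeff 4 (q ^ 2) = 2 * coeff 0 q * coeff 4 q := by
    rw [pow_two, cm4, hE1, hE2, hE3]; ring
  have cq3_4 : coeff 4 (q ^ 3) = 3 * coeff 0 q ^ 2 * coeff 4 q := by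
    rw [hq3, cm4, cq2_0, cq2_1, cq2_2, cq2_3, cq2_4, hE1, hE2, hE3]; ring
  have cq6_4 : coeff 4 (q ^ 6) = (6 * coeff 0 q ^ 5) * coeff 4 q := by
    rw [hq6, cm4, cq3_0, cq3_1, cq3_2, cq3_3, cq3_4, hE1, hE2, hE3]; ring
  have hE4 : coeff 4 q = 0 := by
    have h : (6 * coeff 0 q ^ 5) * coeff 4 q = 0 := by
      rw [← cq6_4, ← s10]; exact hB1zero
    rcases mul_eq_zero.mp h with h' | h'
    · exact absurd h' (mul_ne_zero (by norm_num) (pow_ne_zero _ hE0))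
    · exact h'
  -- step 5 : E0 ^ 3 = 1
  have cq7_3 : coeff 3 (q ^ 7) = 0 := by
    rw [hq7, cm3, cq6_0, cq6_1, cq6_2, cq6_3, hE1, hE2, hE3]; ring
  have cq10_0 : coeff 0 (q ^ 10) = coeff 0 q ^ 10 := by
    rw [PowerSeries.coeff_zero_eq_constantCoeff_apply, map_pow,
      ← PowerSeries.coeff_zero_eq_constantCoeff_apply]
  have hE03 : coeff 0 q ^ 3 = 1 := by
    have h7 : coeff 0 q ^ 7 = coeff 0 q ^ 10 := by
      rw [← t7, t10, cq7_3]; ring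
    have h : coeff 0 q ^ 7 * (coeff 0 q ^ 3 - 1) = 0 := by linear_combination -h7
    rcases mul_eq_zero.mp h with h' | h'
    · exact absurd h' (pow_ne_zero _ hE0)
    · linear_combination h'
  -- step 6: E0 ^ 4 = 1, E0 = 1
  have cq7_4 : coeff 4 (q ^ 7) = 0 := by
    rw [hq7, cm4, cq6_0, cq6_1, cq6_2, cq6_3, cq6_4, hE1, hE2, hE3, hE4]; ring
  have hq10 : q ^ 10 = q ^ 7 * q ^ 3 := by ring
  have cq10_1 : coeff 1 (q ^ 10) = 0 := by
    rw [hq10, cm1, cq7_0, cq7_1, cq3_0, cq3_1, hE1]; ring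
  have cq11_0 : coeff 0 (q ^ 11) = coeff 0 q ^ 11 := by
    rw [PowerSeries.coeff_zero_eq_constantCoeff_apply, map_pow,
      ← PowerSeries.coeff_zero_eq_constantCoeff_apply]
  have hE04 : coeff 0 q ^ 4 = 1 := by
    have h7 : coeff 0 q ^ 7 = coeff 0 q ^ 11 := by
      rw [← t7, t11, cq7_4, cq10_1]; ring
    have h : coeff 0 q ^ 7 * (coeff 0 q ^ 4 - 1) = 0 := by linear_combination -h7
    rcases mul_eq_zero.mp h with h' | h'
    · exact absurd h' (pow_ne_zero _ hE0)
    · linear_combination h'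
  have hE0one : coeff 0 q = 1 := by linear_combination hE04 - coeff 0 q * hE03
  -- conclude
  have hA1one : A1 = 1 := by rw [s6, hE0one]; norm_num
  have hB2one : B2 = 1 := by rw [t7, hE0one]; norm_num
  have hxne : Finsupp.single (0 : Fin 2) 1 ≠ Finsupp.single (1 : Fin 2) 1 := by
    intro h
    have := Finsupp.single_left_injective ((one_ne_zero : (1:ℕ) ≠ 0)) h
    simp at this
  constructor
  · apply mem_mIdeal_sq
    · rw [map_sub, h01, MvPowerSeries.coeff_zero_eq_constantCoeff_apply,
        MvPowerSeries.constantCoeff_X, sub_zero]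
    · rw [map_sub, ← hA1, hA1one, MvPowerSeries.coeff_X, if_pos rfl, sub_self]
    · rw [map_sub, ← hB1, hB1zero, MvPowerSeries.coeff_X, if_neg (Ne.symm hxne), sub_zero]
  · apply mem_mIdeal_sq
    · rw [map_sub, h02, MvPowerSeries.coeff_zero_eq_constantCoeff_apply,
        MvPowerSeries.constantCoeff_X, sub_zero]
    · rw [map_sub, ← hA2, t6, MvPowerSeries.coeff_X, if_neg hxne, sub_zero]
    · rw [map_sub, ← hB2, hB2one, MvPowerSeries.coeff_X, if_pos rfl, sub_self]
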